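/- Let (X_n)_{n≥0} be a transient discrete-time random walk on ℤᵈ with i.i.d. steps, and let γ = P[X_n ≠ X_0 for all n ≥ 1] > 0 be the escape probability. Let R_n = |{X_0, X_1, …, X_n}| be the number of distinct sites visited in the first n steps. Then R_n / n → γ in L¹ as n → ∞. -/

import Mathlib

open MeasureTheory ProbabilityTheory Filter


set_option linter.unusedSectionVars false
set_option linter.unusedVariables false

namespace KSWaux


lemma measure_ext_of_singleton {α : Type*} [MeasurableSpace α] [Countable α]
    [MeasurableSingletonClass α] {ν₁ ν₂ : Measure α}
    (h : ∀ x, ν₁ {x} = ν₂ {x}) : ν₁ = ν₂ := by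
  ext s hs
  have hsc : s.Countable := s.to_countable
  have h1 : s = ⋃ x ∈ s, {x} := (Set.biUnion_of_singleton s).symm
  rw [h1, measure_biUnion hsc (fun a _ b _ hab => by simpa using hab)
      (fun b _ => measurableSet_singleton b),
    measure_biUnion hsc (fun a _ b _ hab => by simpa using hab)
      (fun b _ => measurableSet_singleton b)]
  exact tsum_congr fun x => h x

open Classical in
lemma card_image_eq_card_filter {α : Type*} [DecidableEq α] (f : ℕ → α) (n : ℕ) :
    ((Finset.range (n + 1)).image f).card
      = ((Finset.range (n + 1)).filter
          (fun i => ∀ j, i < j → j ≤ n → f j ≠ f i)).card := by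
  classical
  set s := Finset.range (n + 1) with hs
  set t := s.filter (fun i => ∀ j, i < j → j ≤ n → f j ≠ f i) with ht
  have himg : s.image f = t.image f := by
    apply Finset.Subset.antisymm
    · intro v hv
      obtain ⟨i, hi, rfl⟩ := Finset.mem_image.1 hv
      set u := s.filter (fun j => f j = f i) with hu
      have hiu : i ∈ u := Finset.mem_filter.2 ⟨hi, rfl⟩
      have hune : u.Nonempty := ⟨i, hiu⟩
      have hmem := u.max'_mem hune
      have hval : f (u.max' hune) = f i := (Finset.mem_filter.1 hmem).2
      refine Finset.mem_image.2 ⟨u.max' hune, ?_, hval⟩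
      refine Finset.mem_filter.2 ⟨(Finset.mem_filter.1 hmem).1, ?_⟩
      intro j h1 h2 heq
      have hju : j ∈ u := Finset.mem_filter.2
        ⟨Finset.mem_range.2 (by omega), by rw [heq, hval]⟩
      exact absurd (u.le_max' j hju) (by omega)
    · exact Finset.image_subset_image (Finset.filter_subset _ _)
  have hinj : Set.InjOn f t := by
    intro a ha b hb hab
    rcases lt_trichotomy a b with h | h | h
    · exact absurd hab.symm ((Finset.mem_filter.1 ha).2 b h
        (by have := Finset.mem_range.1 (Finset.mem_filter.1 hb).1; omega))
    · exact h
    · exact absurd hab ((Finset.mem_filter.1 hb).2 a h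
        (by have := Finset.mem_range.1 (Finset.mem_filter.1 ha).1; omega))
  rw [himg, Finset.card_image_of_injOn hinj]


variable {d : ℕ} {Ω : Type} [MeasurableSpace Ω]

/-- "no return within `m` steps after time `i`" event -/
def nr (X : ℕ → Ω → (Fin d → ℤ)) (i m : ℕ) : Set Ω :=
  {ω | ∀ j, 1 ≤ j → j ≤ m → X (i + j) ω ≠ X i ω}

/-- indicator of `nr` -/
noncomputable def Y (X : ℕ → Ω → (Fin d → ℤ)) (i m : ℕ) : Ω → ℝ :=
  (nr X i m).indicator 1

variable {X : ℕ → Ω → (Fin d → ℤ)}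

lemma measurableSet_ne (hXmeas : ∀ n, Measurable (X n)) (a b : ℕ) :
    MeasurableSet {ω | X a ω ≠ X b ω} := by
  have : {ω | X a ω = X b ω} = {ω | X a ω = X b ω} := rfl
  exact (measurableSet_eq_fun (hXmeas a) (hXmeas b)).compl

lemma nr_measurableSet (hXmeas : ∀ n, Measurable (X n)) (i m : ℕ) :
    MeasurableSet (nr X i m) := by
  have h : nr X i m = ⋂ j, ⋂ (_ : 1 ≤ j), ⋂ (_ : j ≤ m), {ω | X (i + j) ω ≠ X i ω} := by
    ext ω; simp [nr]
  rw [h]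
  exact .iInter fun j => .iInter fun _ => .iInter fun _ => measurableSet_ne hXmeas _ _

lemma nr_anti (i : ℕ) {m m' : ℕ} (h : m ≤ m') : nr X i m' ⊆ nr X i m :=
  fun ω hω j h1 h2 => hω j h1 (h2.trans h)

lemma Y_nonneg (i m : ℕ) (ω : Ω) : 0 ≤ Y X i m ω :=
  Set.indicator_nonneg (fun _ _ => zero_le_one) ω

lemma Y_le_one (i m : ℕ) (ω : Ω) : Y X i m ω ≤ 1 := by
  classical
  simp only [Y, Set.indicator_apply]
  split <;> norm_num

lemma Y_measurable (hXmeas : ∀ n, Measurable (X n)) (i m : ℕ) :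
    Measurable (Y X i m) :=
  measurable_const.indicator (nr_measurableSet hXmeas i m)

lemma Y_integrable (P : Measure Ω) [IsProbabilityMeasure P]
    (hXmeas : ∀ n, Measurable (X n)) (i m : ℕ) :
    Integrable (Y X i m) P :=
  (integrable_const (1 : ℝ)).indicator (nr_measurableSet hXmeas i m)

lemma integral_Y (P : Measure Ω) [IsProbabilityMeasure P]
    (hXmeas : ∀ n, Measurable (X n)) (i m : ℕ) :
    ∫ ω, Y X i m ω ∂P = (P (nr X i m)).toReal := by
  have : Y X i m = (nr X i m).indicator (fun _ => (1 : ℝ)) := rfl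
  rw [this, integral_indicator_const (1 : ℝ) (nr_measurableSet hXmeas i m)]
  simp [measureReal_def]

lemma Y_anti (i : ℕ) {m m' : ℕ} (h : m ≤ m') (ω : Ω) : Y X i m' ω ≤ Y X i m ω :=
  Set.indicator_le_indicator_of_subset (nr_anti i h) (fun _ => zero_le_one) ω

/-- the increments tuple -/
def T (X : ℕ → Ω → (Fin d → ℤ)) (i m : ℕ) : Ω → (Fin m → (Fin d → ℤ)) :=
  fun ω k => X (i + k + 1) ω - X (i + k) ω

lemma T_measurable (hXmeas : ∀ n, Measurable (X n)) (i m : ℕ) :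
    Measurable (T X i m) := by
  refine measurable_pi_lambda _ fun k => ?_
  exact (measurable_of_countable (fun p : (Fin d → ℤ) × (Fin d → ℤ) => p.1 - p.2)).comp
    ((hXmeas _).prodMk (hXmeas _))

/-- the "no-return" set in increment-tuple space -/
def B (d m : ℕ) : Set (Fin m → (Fin d → ℤ)) :=
  {v | ∀ j, 1 ≤ j → j ≤ m → (∑ k : Fin m, if (k : ℕ) < j then v k else 0) ≠ 0}

lemma telescope (i j : ℕ) (ω : Ω) :
    X (i + j) ω - X i ω = ∑ k ∈ Finset.range j, (X (i + k + 1) ω - X (i + k) ω) := by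
  induction j with
  | zero => simp
  | succ j ih =>
    rw [Finset.sum_range_succ, ← ih, show i + (j + 1) = i + j + 1 from rfl]
    abel

lemma sum_fin_ite {M : Type*} [AddCommMonoid M] (f : ℕ → M) {j m : ℕ} (hj : j ≤ m) :
    (∑ k : Fin m, if (k : ℕ) < j then f k else 0) = ∑ k ∈ Finset.range j, f k := by
  rw [Fin.sum_univ_eq_sum_range (fun k => if k < j then f k else 0) m, ← Finset.sum_filter]
  congr 1
  ext k
  simp only [Finset.mem_filter, Finset.mem_range]
  omega

lemma nr_eq_preimage (i m : ℕ) : nr X i m = T X i m ⁻¹' B d m := by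
  ext ω
  simp only [nr, B, Set.mem_setOf_eq, Set.mem_preimage]
  refine forall_congr' fun j => forall_congr' fun h1 => forall_congr' fun h2 => ?_
  set v := T X i m ω with hv
  set f : ℕ → (Fin d → ℤ) := fun k => if h : k < m then v ⟨k, h⟩ else 0 with hf
  have e1 : (∑ k : Fin m, if (k : ℕ) < j then v k else 0)
      = ∑ k : Fin m, (if (k : ℕ) < j then f k else 0) := by
    refine Finset.sum_congr rfl fun k _ => ?_
    have : f (k : ℕ) = v k := by simp [hf, k.2]
    rw [this]
  have e2 : ∑ k ∈ Finset.range j, f k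
      = ∑ k ∈ Finset.range j, (X (i + k + 1) ω - X (i + k) ω) := by
    refine Finset.sum_congr rfl fun k hk => ?_
    have hkm : k < m := lt_of_lt_of_le (Finset.mem_range.1 hk) h2
    simp only [hf, dif_pos hkm]
    rfl
  rw [e1, sum_fin_ite f h2, e2, ← telescope, not_iff_not, sub_eq_zero]


lemma measure_T_singleton {P : Measure Ω} [IsProbabilityMeasure P]
    {μ : Measure (Fin d → ℤ)}
    (hXmeas : ∀ n, Measurable (X n))
    (hinc : iIndepFun
      (fun n ω => X (n + 1) ω - X n ω) P)
    (hstep : ∀ n, P.map (fun ω => X (n + 1) ω - X n ω) = μ)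
    (i m : ℕ) (v : Fin m → (Fin d → ℤ)) :
    P (T X i m ⁻¹' {v}) = ∏ k : Fin m, μ {v k} := by
  classical
  set sets : ℕ → Set (Fin d → ℤ) :=
    fun a => if h : a - i < m ∧ i ≤ a then {v ⟨a - i, h.1⟩} else Set.univ with hsets
  have hpre : T X i m ⁻¹' {v}
      = ⋂ a ∈ Finset.Ico i (i + m), (fun ω => X (a + 1) ω - X a ω) ⁻¹' sets a := by
    ext ω
    simp only [Set.mem_preimage, Set.mem_singleton_iff, Set.mem_iInter, Finset.mem_Ico]
    constructor
    · intro h a ha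
      have h1 : a - i < m ∧ i ≤ a := ⟨by omega, ha.1⟩
      simp only [hsets, dif_pos h1, Set.mem_singleton_iff]
      have h2 := congrFun h ⟨a - i, h1.1⟩
      simp only [T] at h2
      have e : i + (a - i) = a := by omega
      rw [e] at h2
      exact h2
    · intro h
      funext k
      have hk : i ≤ i + (k : ℕ) ∧ i + (k : ℕ) < i + m := ⟨by omega, by omega⟩
      have h2 := h (i + k) hk
      have h1 : i + (k : ℕ) - i < m ∧ i ≤ i + (k : ℕ) := ⟨by omega, by omega⟩
      simp only [hsets, dif_pos h1, Set.mem_singleton_iff] at h2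
      have hfin : (⟨i + (k : ℕ) - i, h1.1⟩ : Fin m) = k := by
        ext; simp
      rw [hfin] at h2
      exact h2
  have hmul := hinc.measure_inter_preimage_eq_mul (Finset.Ico i (i + m)) (sets := sets)
    (fun a _ => (Set.to_countable (sets a)).measurableSet)
  rw [hpre, hmul]
  have hval : ∀ a ∈ Finset.Ico i (i + m),
      P ((fun ω => X (a + 1) ω - X a ω) ⁻¹' sets a) = μ (sets a) := by
    intro a _
    have hm : Measurable (fun ω => X (a + 1) ω - X a ω) :=
      (measurable_of_countable (fun p : (Fin d → ℤ) × (Fin d → ℤ) => p.1 - p.2)).comp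
        ((hXmeas _).prodMk (hXmeas _))
    rw [← hstep a, Measure.map_apply hm ((Set.to_countable (sets a)).measurableSet)]
  rw [Finset.prod_congr rfl hval, Finset.prod_Ico_eq_prod_range]
  have : ∀ k ∈ Finset.range (i + m - i), μ (sets (i + k))
      = (fun k : ℕ => if h : k < m then μ {v ⟨k, h⟩} else 1) k := by
    intro k hk
    have hkm : k < m := by have := Finset.mem_range.1 hk; omega
    have h1 : i + k - i < m ∧ i ≤ i + k := ⟨by omega, by omega⟩
    simp only [hsets, dif_pos h1, dif_pos hkm]
    congr 1
    congr 1
    ext; simp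
  rw [Finset.prod_congr rfl this, show i + m - i = m by omega,
    ← Fin.prod_univ_eq_prod_range (fun k : ℕ => if h : k < m then μ {v ⟨k, h⟩} else 1) m]
  refine Finset.prod_congr rfl fun k _ => ?_
  simp [k.2]

lemma measure_nr_const {P : Measure Ω} [IsProbabilityMeasure P]
    {μ : Measure (Fin d → ℤ)}
    (hXmeas : ∀ n, Measurable (X n))
    (hinc : iIndepFun
      (fun n ω => X (n + 1) ω - X n ω) P)
    (hstep : ∀ n, P.map (fun ω => X (n + 1) ω - X n ω) = μ)
    (i m : ℕ) : P (nr X i m) = P (nr X 0 m) := by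
  have hmap : P.map (T X i m) = P.map (T X 0 m) := by
    apply measure_ext_of_singleton
    intro v
    rw [Measure.map_apply (T_measurable hXmeas i m) (measurableSet_singleton v),
      Measure.map_apply (T_measurable hXmeas 0 m) (measurableSet_singleton v),
      measure_T_singleton hXmeas hinc hstep i m v,
      measure_T_singleton hXmeas hinc hstep 0 m v]
  have hB : MeasurableSet (B d m) := (Set.to_countable _).measurableSet
  rw [nr_eq_preimage i m, nr_eq_preimage 0 m,
    ← Measure.map_apply (T_measurable hXmeas i m) hB,
    ← Measure.map_apply (T_measurable hXmeas 0 m) hB, hmap]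

lemma indepFun_Y {P : Measure Ω} [IsProbabilityMeasure P]
    (hXmeas : ∀ n, Measurable (X n))
    (hinc : iIndepFun
      (fun n ω => X (n + 1) ω - X n ω) P)
    {i j m : ℕ} (hij : i + m ≤ j) :
    IndepFun (Y X i m) (Y X j m) P := by
  classical
  have hdisj : Disjoint (Finset.Ico i (i + m)) (Finset.Ico j (j + m)) := by
    rw [Finset.disjoint_left]
    intro a ha hb
    simp only [Finset.mem_Ico] at ha hb
    omega
  have hmeasξ : ∀ n, Measurable (fun ω => X (n + 1) ω - X n ω) := fun n =>
    (measurable_of_countable (fun p : (Fin d → ℤ) × (Fin d → ℤ) => p.1 - p.2)).comp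
      ((hXmeas _).prodMk (hXmeas _))
  have base := hinc.indepFun_finset (Finset.Ico i (i + m)) (Finset.Ico j (j + m))
    hdisj hmeasξ
  set gi : ((a : (Finset.Ico i (i + m) : Finset ℕ)) → (Fin d → ℤ)) → ℝ :=
    fun w => (B d m).indicator 1
      (fun k : Fin m => w ⟨i + k, Finset.mem_Ico.2 ⟨by omega, by omega⟩⟩) with hgi
  set gj : ((a : (Finset.Ico j (j + m) : Finset ℕ)) → (Fin d → ℤ)) → ℝ :=
    fun w => (B d m).indicator 1
      (fun k : Fin m => w ⟨j + k, Finset.mem_Ico.2 ⟨by omega, by omega⟩⟩) with hgj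
  have hYi : Y X i m = gi ∘ (fun ω (a : (Finset.Ico i (i + m) : Finset ℕ)) =>
      X ((a : ℕ) + 1) ω - X (a : ℕ) ω) := by
    funext ω
    have : Y X i m ω = (B d m).indicator 1 (T X i m ω) := by
      rw [Y, nr_eq_preimage i m]
      classical
      by_cases h : T X i m ω ∈ B d m <;>
        simp [Set.indicator_apply, h, Set.mem_preimage]
    rw [this]
    rfl
  have hYj : Y X j m = gj ∘ (fun ω (a : (Finset.Ico j (j + m) : Finset ℕ)) =>
      X ((a : ℕ) + 1) ω - X (a : ℕ) ω) := by
    funext ω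
    have : Y X j m ω = (B d m).indicator 1 (T X j m ω) := by
      rw [Y, nr_eq_preimage j m]
      classical
      by_cases h : T X j m ω ∈ B d m <;>
        simp [Set.indicator_apply, h, Set.mem_preimage]
    rw [this]
    rfl
  rw [hYi, hYj]
  exact base.comp (measurable_of_countable gi) (measurable_of_countable gj)


section Var

variable {P : Measure Ω} [IsProbabilityMeasure P]
  {μ : Measure (Fin d → ℤ)}
  (hXmeas : ∀ n, Measurable (X n))
  (hinc : iIndepFun
    (fun n ω => X (n + 1) ω - X n ω) P)
  (hstep : ∀ n, P.map (fun ω => X (n + 1) ω - X n ω) = μ)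

include hXmeas hinc hstep

lemma integral_Y_eq (i m : ℕ) :
    ∫ ω, Y X i m ω ∂P = (P (nr X 0 m)).toReal := by
  rw [integral_Y P hXmeas i m, measure_nr_const hXmeas hinc hstep i m]

lemma integrable_Y_mul (i j m : ℕ) :
    Integrable (fun ω => Y X i m ω * Y X j m ω) P := by
  refine Integrable.bdd_mul (Y_integrable P hXmeas j m)
    (Y_measurable hXmeas i m).aestronglyMeasurable (c := 1) (Filter.Eventually.of_forall fun ω => ?_)
  rw [Real.norm_eq_abs, abs_of_nonneg (Y_nonneg i m ω)]
  exact Y_le_one i m ω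

lemma integral_Y_mul_le_one (i j m : ℕ) :
    ∫ ω, Y X i m ω * Y X j m ω ∂P ≤ 1 := by
  calc ∫ ω, Y X i m ω * Y X j m ω ∂P
      ≤ ∫ _ω, (1 : ℝ) ∂P := by
        refine integral_mono (integrable_Y_mul hXmeas hinc hstep i j m) (integrable_const 1) fun ω => ?_
        calc Y X i m ω * Y X j m ω ≤ 1 * 1 :=
              mul_le_mul (Y_le_one i m ω) (Y_le_one j m ω) (Y_nonneg j m ω) zero_le_one
          _ = 1 := by norm_num
    _ = 1 := by simp

lemma integral_Y_mul_far {i j m : ℕ} (h : i + m ≤ j ∨ j + m ≤ i) :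
    ∫ ω, Y X i m ω * Y X j m ω ∂P
      = (P (nr X 0 m)).toReal * (P (nr X 0 m)).toReal := by
  have hind : IndepFun (Y X i m) (Y X j m) P := by
    rcases h with h | h
    · exact indepFun_Y hXmeas hinc h
    · exact (indepFun_Y hXmeas hinc h).symm
  have hmul := hind.integral_mul_eq_mul_integral (Y_integrable P hXmeas i m).aestronglyMeasurable
    (Y_integrable P hXmeas j m).aestronglyMeasurable
  have he : ∫ ω, Y X i m ω * Y X j m ω ∂P = integral P (Y X i m * Y X j m) := rfl
  rw [he, hmul, show integral P (Y X i m) = ∫ ω, Y X i m ω ∂P from rfl,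
    show integral P (Y X j m) = ∫ ω, Y X j m ω ∂P from rfl,
    integral_Y_eq hXmeas hinc hstep, integral_Y_eq hXmeas hinc hstep]

lemma integrable_Zc_mul (i j m : ℕ) :
    Integrable (fun ω => (Y X i m ω - (P (nr X 0 m)).toReal)
      * (Y X j m ω - (P (nr X 0 m)).toReal)) P := by
  refine Integrable.bdd_mul ((Y_integrable P hXmeas j m).sub (integrable_const _))
    ((Y_measurable hXmeas i m).sub measurable_const).aestronglyMeasurable
    (c := 1 + |(P (nr X 0 m)).toReal|) (Filter.Eventually.of_forall fun ω => ?_)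
  rw [Real.norm_eq_abs]
  refine (abs_sub _ _).trans ?_
  gcongr
  rw [abs_of_nonneg (Y_nonneg i m ω)]
  exact Y_le_one i m ω

lemma integral_Zc_mul (i j m : ℕ) :
    ∫ ω, (Y X i m ω - (P (nr X 0 m)).toReal)
        * (Y X j m ω - (P (nr X 0 m)).toReal) ∂P
      = ∫ ω, Y X i m ω * Y X j m ω ∂P
        - (P (nr X 0 m)).toReal * (P (nr X 0 m)).toReal := by
  set q := (P (nr X 0 m)).toReal with hq
  have hexp : ∀ ω, (Y X i m ω - q) * (Y X j m ω - q)
      = Y X i m ω * Y X j m ω - q * Y X i m ω - q * Y X j m ω + q * q := by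
    intro ω; ring
  simp only [hexp]
  rw [integral_add, integral_sub, integral_sub]
  · rw [integral_const_mul q, integral_const_mul q, integral_Y_eq hXmeas hinc hstep,
      integral_Y_eq hXmeas hinc hstep, integral_const]
    simp only [probReal_univ, ENNReal.toReal_one, one_smul, ← hq]
    ring
  · exact integrable_Y_mul hXmeas hinc hstep i j m
  · exact (Y_integrable P hXmeas i m).const_mul q
  · exact ((integrable_Y_mul hXmeas hinc hstep i j m).sub ((Y_integrable P hXmeas i m).const_mul q))
  · exact (Y_integrable P hXmeas j m).const_mul q
  · exact (((integrable_Y_mul hXmeas hinc hstep i j m).sub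
      ((Y_integrable P hXmeas i m).const_mul q)).sub
      ((Y_integrable P hXmeas j m).const_mul q))
  · exact integrable_const _

lemma var_sum_le (m N : ℕ) :
    ∫ ω, (∑ i ∈ Finset.range N, (Y X i m ω - (P (nr X 0 m)).toReal))^2 ∂P
      ≤ (N : ℝ) * (2 * m + 1) := by
  classical
  set q := (P (nr X 0 m)).toReal with hq
  have hsq : ∀ ω : Ω, (∑ i ∈ Finset.range N, (Y X i m ω - q))^2
      = ∑ i ∈ Finset.range N, ∑ j ∈ Finset.range N,
          (Y X i m ω - q) * (Y X j m ω - q) := by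
    intro ω
    rw [sq, Finset.sum_mul_sum]
  simp only [hsq]
  rw [integral_finset_sum _ (fun i _ => integrable_finset_sum _
    (fun j _ => integrable_Zc_mul hXmeas hinc hstep i j m))]
  have hterm : ∀ i ∈ Finset.range N, ∫ ω, ∑ j ∈ Finset.range N,
      (Y X i m ω - q) * (Y X j m ω - q) ∂P
      = ∑ j ∈ Finset.range N, ∫ ω, (Y X i m ω - q) * (Y X j m ω - q) ∂P := by
    intro i _
    exact integral_finset_sum _ (fun j _ => integrable_Zc_mul hXmeas hinc hstep i j m)
  rw [Finset.sum_congr rfl hterm]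
  have hbound : ∀ i ∈ Finset.range N, ∀ j ∈ Finset.range N,
      ∫ ω, (Y X i m ω - q) * (Y X j m ω - q) ∂P
        ≤ if i + m ≤ j ∨ j + m ≤ i then 0 else 1 := by
    intro i _ j _
    rw [integral_Zc_mul hXmeas hinc hstep i j m]
    by_cases h : i + m ≤ j ∨ j + m ≤ i
    · rw [if_pos h, integral_Y_mul_far hXmeas hinc hstep h]
      simp [← hq]
    · rw [if_neg h]
      have h1 := integral_Y_mul_le_one hXmeas hinc hstep i j m (P := P)
      have h2 : 0 ≤ q * q := mul_nonneg ENNReal.toReal_nonneg ENNReal.toReal_nonneg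
      simp only [← hq]
      linarith
  calc ∑ i ∈ Finset.range N, ∑ j ∈ Finset.range N,
        ∫ ω, (Y X i m ω - q) * (Y X j m ω - q) ∂P
      ≤ ∑ i ∈ Finset.range N, ∑ j ∈ Finset.range N,
          (if i + m ≤ j ∨ j + m ≤ i then (0:ℝ) else 1) :=
        Finset.sum_le_sum (fun i hi => Finset.sum_le_sum (fun j hj => hbound i hi j hj))
    _ ≤ ∑ _i ∈ Finset.range N, (2 * (m:ℝ) + 1) := by
        refine Finset.sum_le_sum (fun i _ => ?_)
        have hcount : ((Finset.range N).filter
            (fun j => ¬ (i + m ≤ j ∨ j + m ≤ i))).card ≤ 2 * m + 1 := by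
          have hsub : (Finset.range N).filter
              (fun j => ¬ (i + m ≤ j ∨ j + m ≤ i)) ⊆ Finset.Ico (i + 1 - m) (i + m) := by
            intro j hj
            have hj' := Finset.mem_filter.1 hj
            exact Finset.mem_Ico.2 (by push_neg at hj'; omega)
          refine le_trans (Finset.card_le_card hsub) ?_
          rw [Nat.card_Ico]
          omega
        calc ∑ j ∈ Finset.range N, (if i + m ≤ j ∨ j + m ≤ i then (0:ℝ) else 1)
            = ((Finset.range N).filter (fun j => ¬ (i + m ≤ j ∨ j + m ≤ i))).card := by
              rw [Finset.sum_ite, Finset.sum_const, Finset.sum_const]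
              simp
          _ ≤ 2 * (m:ℝ) + 1 := by
              have := (Nat.cast_le (α := ℝ)).2 hcount
              push_cast at this ⊢
              linarith
    _ = (N : ℝ) * (2 * m + 1) := by
        rw [Finset.sum_const, Finset.card_range]
        ring

end Var

lemma abs_integral_le_sqrt {P : Measure Ω} [IsProbabilityMeasure P]
    {g : Ω → ℝ} (hg : Measurable g) {C : ℝ} (hC : ∀ ω, |g ω| ≤ C) :
    ∫ ω, |g ω| ∂P ≤ Real.sqrt (∫ ω, (g ω)^2 ∂P) := by
  have hmem : MemLp (fun ω => |g ω|) 2 P :=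
    MemLp.of_bound hg.abs.aestronglyMeasurable C
      (Filter.Eventually.of_forall fun ω => by
        rw [Real.norm_eq_abs, abs_abs]; exact hC ω)
  have hvar := variance_nonneg (fun ω => |g ω|) P
  rw [variance_eq_sub hmem] at hvar
  have h1 : (∫ ω, |g ω| ∂P)^2 ≤ ∫ ω, (g ω)^2 ∂P := by
    have h2 : ∫ x, ((fun ω => |g ω|)^2) x ∂P = ∫ ω, (g ω)^2 ∂P := by
      refine integral_congr_ae (Filter.Eventually.of_forall fun ω => ?_)
      simp [sq_abs]
    rw [h2] at hvar
    linarith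
  have h0 : 0 ≤ ∫ ω, |g ω| ∂P := integral_nonneg (fun ω => abs_nonneg _)
  calc ∫ ω, |g ω| ∂P = Real.sqrt ((∫ ω, |g ω| ∂P)^2) := (Real.sqrt_sq h0).symm
    _ ≤ Real.sqrt (∫ ω, (g ω)^2 ∂P) := Real.sqrt_le_sqrt h1

open Finset in
lemma key_bound {P : Measure Ω} [IsProbabilityMeasure P]
    {μ : Measure (Fin d → ℤ)}
    (hXmeas : ∀ n, Measurable (X n))
    (hinc : iIndepFun
      (fun n ω => X (n + 1) ω - X n ω) P)
    (hstep : ∀ n, P.map (fun ω => X (n + 1) ω - X n ω) = μ)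
    {γ : ℝ} (hγ : γ = (P {ω | ∀ k, 1 ≤ k → X k ω ≠ X 0 ω}).toReal)
    (R : ℕ → Ω → ℕ)
    (hR : ∀ n ω, R n ω = ((Finset.range (n + 1)).image (fun i => X i ω)).card)
    {m n : ℕ} (hmn : m ≤ n) (hn : 1 ≤ n) :
    ∫ ω, |(R n ω : ℝ) / (n : ℝ) - γ| ∂P
      ≤ (m : ℝ) / n + 2 * ((P (nr X 0 m)).toReal - γ)
        + Real.sqrt (((n : ℝ) + 1) * (2 * m + 1)) / n
        + ((P (nr X 0 m)).toReal - γ) + 1 / n := by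
  classical
  have hn0 : (0 : ℝ) < n := by exact_mod_cast hn
  set qm : ℝ := (P (nr X 0 m)).toReal with hqm
  set qn : ℝ := (P (nr X 0 n)).toReal with hqn
  -- γ ≤ q_k for every k, and q_m ≤ 1
  have hγle : ∀ k : ℕ, γ ≤ (P (nr X 0 k)).toReal := by
    intro k
    rw [hγ]
    refine ENNReal.toReal_mono (measure_ne_top P _) (measure_mono ?_)
    intro ω hω j hj1 hj2
    simpa using hω j hj1
  have hq1 : qm ≤ 1 := by
    rw [hqm]
    refine ENNReal.toReal_le_of_le_ofReal zero_le_one ?_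
    simpa using prob_le_one
  have hγqm : γ ≤ qm := hγle m
  have hγqn : γ ≤ qn := hγle n
  have hqmqn : qn ≤ qm :=
    ENNReal.toReal_mono (measure_ne_top P _) (measure_mono (nr_anti 0 hmn))
  -- the "last new site" sets
  set L : ℕ → Set Ω := fun i => {ω | ∀ j, i < j → j ≤ n → X j ω ≠ X i ω} with hL
  have hLmeas : ∀ i, MeasurableSet (L i) := by
    intro i
    have h : L i = ⋂ j, ⋂ (_ : i < j), ⋂ (_ : j ≤ n), {ω | X j ω ≠ X i ω} := by
      ext ω; simp [hL]
    rw [h]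
    exact .iInter fun j => .iInter fun _ => .iInter fun _ => measurableSet_ne hXmeas _ _
  -- R as a sum of indicators
  have hRsum : ∀ ω, (R n ω : ℝ) = ∑ i ∈ range (n + 1), (L i).indicator (1 : Ω → ℝ) ω := by
    intro ω
    rw [hR n ω, card_image_eq_card_filter (fun i => X i ω) n, Finset.card_filter]
    push_cast
    refine Finset.sum_congr rfl fun i _ => ?_
    by_cases h : ∀ j, i < j → j ≤ n → X j ω ≠ X i ω
    · rw [if_pos h, Set.indicator_of_mem (show ω ∈ L i from h)]; rfl
    · rw [if_neg h, Set.indicator_of_notMem (show ω ∉ L i from h)]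
  set Tm : Ω → ℝ := fun ω => ∑ i ∈ range (n + 1), Y X i m ω with hTm
  set D : Ω → ℝ := fun ω => ∑ i ∈ range (n + 1), (Y X i m ω - Y X i n ω) with hD
  have hD0 : ∀ ω, 0 ≤ D ω := fun ω =>
    Finset.sum_nonneg fun i _ => sub_nonneg.2 (Y_anti i hmn ω)
  -- upper bound : R ≤ Tm + m
  have hup : ∀ ω, (R n ω : ℝ) ≤ Tm ω + m := by
    intro ω
    rw [hRsum ω]
    have h1 : ∀ i ∈ range (n + 1),
        (L i).indicator (1 : Ω → ℝ) ω ≤ Y X i m ω + (if i + m ≤ n then (0:ℝ) else 1) := by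
      intro i _
      by_cases hc : i + m ≤ n
      · rw [if_pos hc, add_zero]
        have hsub : L i ⊆ nr X i m := by
          intro ω' hω' j hj1 hj2
          exact hω' (i + j) (by omega) (by omega)
        exact Set.indicator_le_indicator_of_subset hsub (fun _ => zero_le_one) ω
      · rw [if_neg hc]
        have h2 : (L i).indicator (1 : Ω → ℝ) ω ≤ 1 := by
          by_cases h : ω ∈ L i
          · rw [Set.indicator_of_mem h]; exact le_refl _
          · rw [Set.indicator_of_notMem h]; exact zero_le_one
        have h3 := Y_nonneg (X := X) i m ω
        linarith
    calc ∑ i ∈ range (n + 1), (L i).indicator (1 : Ω → ℝ) ω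
        ≤ ∑ i ∈ range (n + 1), (Y X i m ω + (if i + m ≤ n then (0:ℝ) else 1)) :=
          Finset.sum_le_sum h1
      _ = Tm ω + ∑ i ∈ range (n + 1), (if i + m ≤ n then (0:ℝ) else 1) := by
          rw [Finset.sum_add_distrib]
      _ ≤ Tm ω + m := by
          have hcount : ((range (n + 1)).filter (fun i => ¬ (i + m ≤ n))).card ≤ m := by
            have hsub : (range (n + 1)).filter (fun i => ¬ (i + m ≤ n))
                ⊆ Finset.Ico (n + 1 - m) (n + 1) := by
              intro i hi
              have hi' := Finset.mem_filter.1 hi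
              have := Finset.mem_range.1 hi'.1
              exact Finset.mem_Ico.2 (by push_neg at hi'; omega)
            refine le_trans (Finset.card_le_card hsub) ?_
            rw [Nat.card_Ico]; omega
          have heq : ∑ i ∈ range (n + 1), (if i + m ≤ n then (0:ℝ) else 1)
              = (((range (n + 1)).filter (fun i => ¬ (i + m ≤ n))).card : ℝ) := by
            rw [Finset.sum_ite, Finset.sum_const, Finset.sum_const]
            simp
          rw [heq]
          have := (Nat.cast_le (α := ℝ)).2 hcount
          linarith
  -- lower bound : Tm - D ≤ R
  have hlow : ∀ ω, Tm ω - D ω ≤ (R n ω : ℝ) := by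
    intro ω
    have h0 : Tm ω - D ω = ∑ i ∈ range (n + 1), Y X i n ω := by
      rw [hTm, hD, ← Finset.sum_sub_distrib]
      refine Finset.sum_congr rfl fun i _ => by ring
    rw [h0, hRsum ω]
    refine Finset.sum_le_sum fun i _ => ?_
    have hsub : nr X i n ⊆ L i := by
      intro ω' hω' j hj1 hj2
      have h := hω' (j - i) (by omega) (by omega)
      rw [show i + (j - i) = j by omega] at h
      exact h
    exact Set.indicator_le_indicator_of_subset hsub (fun _ => zero_le_one) ω
  have habs : ∀ ω, |(R n ω : ℝ) - Tm ω| ≤ m + D ω := by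
    intro ω
    rw [abs_le]
    have h1 := hlow ω
    have h2 := hup ω
    have h3 := hD0 ω
    constructor <;> [linarith; linarith]
  -- pointwise triangle inequality
  have hpt : ∀ ω, |(R n ω : ℝ) / n - γ|
      ≤ ((m : ℝ) + D ω) / n + |Tm ω - ((n : ℝ) + 1) * qm| / n
        + (((n : ℝ) + 1) * qm / n - γ) := by
    intro ω
    have hdecomp : (R n ω : ℝ) / n - γ
        = ((R n ω : ℝ) - Tm ω) / n + (Tm ω - ((n : ℝ) + 1) * qm) / n
          + (((n : ℝ) + 1) * qm / n - γ) := by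
      field_simp; ring
    have hlast : 0 ≤ ((n : ℝ) + 1) * qm / n - γ := by
      have h1 : qm ≤ ((n : ℝ) + 1) * qm / n := by
        rw [le_div_iff₀ hn0]
        nlinarith [ENNReal.toReal_nonneg (a := P (nr X 0 m))]
      linarith
    calc |(R n ω : ℝ) / n - γ|
        ≤ |((R n ω : ℝ) - Tm ω) / n| + |(Tm ω - ((n : ℝ) + 1) * qm) / n|
          + |((n : ℝ) + 1) * qm / n - γ| := by
          rw [hdecomp]
          exact (abs_add_le _ _).trans (by gcongr; exact abs_add_le _ _)
      _ ≤ ((m : ℝ) + D ω) / n + |Tm ω - ((n : ℝ) + 1) * qm| / n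
          + (((n : ℝ) + 1) * qm / n - γ) := by
          rw [abs_div, abs_div, abs_of_nonneg hn0.le, abs_of_nonneg hlast]
          gcongr
          exact habs ω
  -- integrability facts
  have hYint : ∀ i k : ℕ, Integrable (Y X i k) P := fun i k => Y_integrable P hXmeas i k
  have hDint : Integrable D P :=
    integrable_finset_sum _ fun i _ => (hYint i m).sub (hYint i n)
  have hTmint : Integrable Tm P := integrable_finset_sum _ fun i _ => hYint i m
  have hRint : Integrable (fun ω => (R n ω : ℝ)) P := by
    have h : (fun ω => (R n ω : ℝ))
        = fun ω => ∑ i ∈ range (n + 1), (L i).indicator (1 : Ω → ℝ) ω := funext hRsum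
    rw [h]
    exact integrable_finset_sum _ fun i _ => (integrable_const (1:ℝ)).indicator (hLmeas i)
  have hf1int : Integrable (fun ω => ((m : ℝ) + D ω) / n) P :=
    (((integrable_const (m : ℝ)).add hDint).div_const _)
  have hf2int : Integrable (fun ω => |Tm ω - ((n : ℝ) + 1) * qm| / n) P :=
    ((hTmint.sub (integrable_const _)).abs.div_const _)
  have hLHSint : Integrable (fun ω => |(R n ω : ℝ) / n - γ|) P :=
    ((hRint.div_const _).sub (integrable_const γ)).abs
  -- integrate the pointwise bound
  have hmono : ∫ ω, |(R n ω : ℝ) / n - γ| ∂P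
      ≤ ∫ ω, (((m : ℝ) + D ω) / n + |Tm ω - ((n : ℝ) + 1) * qm| / n
          + (((n : ℝ) + 1) * qm / n - γ)) ∂P := by
    refine integral_mono hLHSint ?_ hpt
    exact (hf1int.add hf2int).add (integrable_const _)
  have hf12int : Integrable (fun ω => ((m : ℝ) + D ω) / n
      + |Tm ω - ((n : ℝ) + 1) * qm| / n) P := hf1int.add hf2int
  have hsplit : ∫ ω, (((m : ℝ) + D ω) / n + |Tm ω - ((n : ℝ) + 1) * qm| / n
        + (((n : ℝ) + 1) * qm / n - γ)) ∂P
      = ∫ ω, ((m : ℝ) + D ω) / n ∂P + ∫ ω, |Tm ω - ((n : ℝ) + 1) * qm| / n ∂P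
        + (((n : ℝ) + 1) * qm / n - γ) := by
    rw [integral_add hf12int (integrable_const _), integral_add hf1int hf2int,
      integral_const]
    simp [measure_univ]
  rw [hsplit] at hmono
  -- compute / bound each integral
  have hI1 : ∫ ω, ((m : ℝ) + D ω) / n ∂P ≤ (m : ℝ) / n + 2 * (qm - γ) := by
    have hDval : ∫ ω, D ω ∂P = ((n : ℝ) + 1) * (qm - qn) := by
      have hsum := integral_finset_sum (μ := P) (Finset.range (n + 1))
        (f := fun i ω => Y X i m ω - Y X i n ω)
        (fun i _ => (hYint i m).sub (hYint i n))
      rw [hD]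
      rw [hsum]
      have h : ∀ i ∈ range (n + 1), ∫ ω, (Y X i m ω - Y X i n ω) ∂P = qm - qn := by
        intro i _
        rw [integral_sub (hYint i m) (hYint i n),
          integral_Y_eq hXmeas hinc hstep i m, integral_Y_eq hXmeas hinc hstep i n]
      rw [Finset.sum_congr rfl h, Finset.sum_const, Finset.card_range]
      push_cast
      ring
    have h1 : ∫ ω, ((m : ℝ) + D ω) / n ∂P = ((m : ℝ) + ∫ ω, D ω ∂P) / n := by
      rw [integral_div, integral_add (integrable_const _) hDint, integral_const]
      simp [measure_univ]
    rw [h1, hDval, div_le_iff₀ hn0]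
    have hnn : (n : ℝ) + 1 ≤ 2 * n := by
      have h2 : (1 : ℝ) ≤ n := by exact_mod_cast hn
      linarith
    have hqd : 0 ≤ qm - qn := by linarith
    calc (m : ℝ) + ((n : ℝ) + 1) * (qm - qn)
        ≤ (m : ℝ) + 2 * n * (qm - γ) := by nlinarith
      _ = ((m : ℝ) / n + 2 * (qm - γ)) * n := by field_simp
  have hI2 : ∫ ω, |Tm ω - ((n : ℝ) + 1) * qm| / n ∂P
      ≤ Real.sqrt (((n : ℝ) + 1) * (2 * m + 1)) / n := by
    have hg : ∀ ω, Tm ω - ((n : ℝ) + 1) * qm = ∑ i ∈ range (n + 1), (Y X i m ω - qm) := by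
      intro ω
      rw [hTm, Finset.sum_sub_distrib, Finset.sum_const, Finset.card_range]
      push_cast
      ring
    have hgmeas : Measurable (fun ω => Tm ω - ((n : ℝ) + 1) * qm) := by
      have h : Measurable Tm := by
        rw [hTm]
        exact Finset.measurable_sum _ fun i _ => Y_measurable hXmeas i m
      exact h.sub measurable_const
    have hgbdd : ∀ ω, |Tm ω - ((n : ℝ) + 1) * qm| ≤ ((n : ℝ) + 1) * (1 + qm) := by
      intro ω
      rw [hg ω]
      refine (Finset.abs_sum_le_sum_abs _ _).trans ?_
      have h : ∀ i ∈ range (n + 1), |Y X i m ω - qm| ≤ 1 + qm := by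
        intro i _
        rw [abs_le]
        have h1 := Y_nonneg (X := X) i m ω
        have h2 := Y_le_one (X := X) i m ω
        have h3 : (0:ℝ) ≤ qm := ENNReal.toReal_nonneg
        constructor <;> linarith
      refine (Finset.sum_le_sum h).trans ?_
      rw [Finset.sum_const, Finset.card_range, nsmul_eq_mul]
      push_cast
      linarith
    have hL1L2 := abs_integral_le_sqrt (P := P) hgmeas hgbdd
    have hvar : ∫ ω, (Tm ω - ((n : ℝ) + 1) * qm)^2 ∂P ≤ ((n : ℝ) + 1) * (2 * m + 1) := by
      have h := var_sum_le hXmeas hinc hstep m (n + 1)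
      have heq : ∀ ω, (Tm ω - ((n : ℝ) + 1) * qm)^2
          = (∑ i ∈ range (n + 1), (Y X i m ω - qm))^2 := fun ω => by rw [hg ω]
      calc ∫ ω, (Tm ω - ((n : ℝ) + 1) * qm)^2 ∂P
          = ∫ ω, (∑ i ∈ range (n + 1), (Y X i m ω - qm))^2 ∂P :=
            integral_congr_ae (Filter.Eventually.of_forall heq)
        _ ≤ ((n + 1 : ℕ) : ℝ) * (2 * m + 1) := h
        _ = ((n : ℝ) + 1) * (2 * m + 1) := by push_cast; ring
    have h2 : ∫ ω, |Tm ω - ((n : ℝ) + 1) * qm| ∂P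
        ≤ Real.sqrt (((n : ℝ) + 1) * (2 * m + 1)) :=
      hL1L2.trans (Real.sqrt_le_sqrt hvar)
    rw [integral_div]
    gcongr
  have hI3 : ((n : ℝ) + 1) * qm / n - γ ≤ (qm - γ) + 1 / n := by
    have h1 : ((n : ℝ) + 1) * qm / n = qm + qm / n := by field_simp
    rw [h1]
    have h2 : qm / n ≤ 1 / n := by gcongr
    linarith
  linarith

lemma q_tendsto {P : Measure Ω} [IsProbabilityMeasure P]
    (hXmeas : ∀ n, Measurable (X n)) :
    Tendsto (fun m => (P (nr X 0 m)).toReal) atTop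
      (nhds ((P {ω | ∀ k, 1 ≤ k → X k ω ≠ X 0 ω}).toReal)) := by
  have h1 := tendsto_measure_iInter_atTop (μ := P) (s := fun m => nr X 0 m)
    (fun m => (nr_measurableSet hXmeas 0 m).nullMeasurableSet)
    (fun a b hab => nr_anti 0 hab) ⟨0, measure_ne_top P _⟩
  have h2 : ⋂ m, nr X 0 m = {ω | ∀ k, 1 ≤ k → X k ω ≠ X 0 ω} := by
    ext ω
    simp only [Set.mem_iInter, Set.mem_setOf_eq, nr]
    constructor
    · intro h k hk
      have := h k k hk le_rfl
      simpa using this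
    · intro h m j hj1 _
      simpa using h j hj1
  rw [h2] at h1
  exact (ENNReal.tendsto_toReal (measure_ne_top P _)).comp h1

lemma sqrt_term_tendsto (m : ℕ) :
    Tendsto (fun n : ℕ => Real.sqrt (((n : ℝ) + 1) * (2 * m + 1)) / n) atTop (nhds 0) := by
  have hc : (0 : ℝ) ≤ 2 * (2 * (m : ℝ) + 1) := by positivity
  have hz : Tendsto (fun n : ℕ => (Real.sqrt n)⁻¹) atTop (nhds 0) := by
    have h := (Real.continuous_sqrt.tendsto 0).comp tendsto_one_div_atTop_nhds_zero_nat
    have he : ((fun x => Real.sqrt x) ∘ fun n : ℕ => ((n : ℝ))⁻¹)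
        = fun n : ℕ => (Real.sqrt n)⁻¹ := by
      funext n
      simp [Function.comp, Real.sqrt_inv]
    simpa [one_div, Real.sqrt_zero, he] using h
  have hmul : Tendsto (fun n : ℕ => Real.sqrt (2 * (2 * (m : ℝ) + 1)) * (Real.sqrt n)⁻¹)
      atTop (nhds 0) := by
    simpa using hz.const_mul (Real.sqrt (2 * (2 * (m : ℝ) + 1)))
  refine squeeze_zero' ?_ ?_ hmul
  · filter_upwards with n
    positivity
  · filter_upwards [eventually_ge_atTop 1] with n hn
    have hn0 : (0 : ℝ) < n := by exact_mod_cast hn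
    have h1 : ((n : ℝ) + 1) * (2 * m + 1) ≤ (2 * (2 * (m : ℝ) + 1)) * n := by
      have h0 : (n : ℝ) + 1 ≤ 2 * n := by
        have : (1 : ℝ) ≤ n := by exact_mod_cast hn
        linarith
      have hm0 : (0 : ℝ) ≤ 2 * (m : ℝ) + 1 := by positivity
      nlinarith
    have h2 : Real.sqrt (((n : ℝ) + 1) * (2 * m + 1))
        ≤ Real.sqrt (2 * (2 * (m : ℝ) + 1)) * Real.sqrt n := by
      rw [← Real.sqrt_mul hc]
      exact Real.sqrt_le_sqrt h1
    rw [div_le_iff₀ hn0]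
    calc Real.sqrt (((n : ℝ) + 1) * (2 * m + 1))
        ≤ Real.sqrt (2 * (2 * (m : ℝ) + 1)) * Real.sqrt n := h2
      _ = Real.sqrt (2 * (2 * (m : ℝ) + 1)) * (Real.sqrt n)⁻¹ * n := by
          have hs : Real.sqrt (n : ℝ) ≠ 0 := by positivity
          rw [mul_assoc]
          congr 1
          rw [eq_comm, inv_mul_eq_div, div_eq_iff hs, eq_comm]
          exact Real.mul_self_sqrt hn0.le

end KSWaux

open MeasureTheory ProbabilityTheory Filter

/-- Kesten–Spitzer–Whitman range theorem: for a transient random walk with escape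
probability `γ > 0`, the range satisfies `R n / n → γ` in `L¹`. -/
theorem range_over_n_tendsto_escape_probability_L1
    (d : ℕ) {Ω : Type} [MeasurableSpace Ω] (P : Measure Ω) [IsProbabilityMeasure P]
    (μ : Measure (Fin d → ℤ)) [IsProbabilityMeasure μ]
    (X : ℕ → Ω → (Fin d → ℤ))
    (hX0 : ∀ ω, X 0 ω = 0)
    (hXmeas : ∀ n, Measurable (X n))
    (hinc : iIndepFun
      (fun n ω => X (n + 1) ω - X n ω) P)
    (hstep : ∀ n, P.map (fun ω => X (n + 1) ω - X n ω) = μ)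
    (γ : ℝ)
    (hγ : γ = (P {ω | ∀ n, 1 ≤ n → X n ω ≠ X 0 ω}).toReal)
    (hγpos : 0 < γ)  -- transience
    (R : ℕ → Ω → ℕ)
    (hR : ∀ n ω, R n ω = ((Finset.range (n + 1)).image (fun i => X i ω)).card) :
    Tendsto (fun n => ∫ ω, |(R n ω : ℝ) / (n : ℝ) - γ| ∂P) atTop (nhds 0) := by

  classical
  have hγle : ∀ k : ℕ, γ ≤ (P (KSWaux.nr X 0 k)).toReal := by
    intro k
    rw [hγ]
    refine ENNReal.toReal_mono (measure_ne_top P _) (measure_mono ?_)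
    intro ω hω j hj1 hj2
    simpa using hω j hj1
  rw [Metric.tendsto_atTop]
  intro ε hε
  have hq : Tendsto (fun m => (P (KSWaux.nr X 0 m)).toReal) atTop (nhds γ) := by
    have := KSWaux.q_tendsto (P := P) (X := X) hXmeas
    rwa [← hγ] at this
  obtain ⟨m, hm⟩ := (hq.eventually (gt_mem_nhds (show γ < γ + ε / 8 by linarith))).exists
  have t1 : Tendsto (fun n : ℕ => (m : ℝ) / n) atTop (nhds 0) :=
    tendsto_const_div_atTop_nhds_zero_nat (m : ℝ)
  have t2 := KSWaux.sqrt_term_tendsto m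
  have t3 : Tendsto (fun n : ℕ => 1 / (n : ℝ)) atTop (nhds 0) :=
    tendsto_one_div_atTop_nhds_zero_nat
  have he1 := t1.eventually (gt_mem_nhds (show (0:ℝ) < ε / 8 by linarith))
  have he2 := t2.eventually (gt_mem_nhds (show (0:ℝ) < ε / 8 by linarith))
  have he3 := t3.eventually (gt_mem_nhds (show (0:ℝ) < ε / 8 by linarith))
  have he4 : ∀ᶠ n : ℕ in atTop, m ≤ n ∧ 1 ≤ n := by
    filter_upwards [eventually_ge_atTop m, eventually_ge_atTop 1] with n h1 h2
    exact ⟨h1, h2⟩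
  obtain ⟨N, hN⟩ := (((he1.and he2).and he3).and he4).exists_forall_of_atTop
  refine ⟨N, fun n hn => ?_⟩
  obtain ⟨⟨⟨hn1, hn2⟩, hn3⟩, hn4, hn5⟩ := hN n hn
  have hkey := KSWaux.key_bound (P := P) hXmeas hinc hstep hγ R hR hn4 hn5
  have hEnonneg : 0 ≤ ∫ ω, |(R n ω : ℝ) / (n : ℝ) - γ| ∂P :=
    integral_nonneg fun ω => abs_nonneg _
  rw [Real.dist_eq, sub_zero, abs_of_nonneg hEnonneg]
  have hqmγ1 : 0 ≤ (P (KSWaux.nr X 0 m)).toReal - γ := by linarith [hγle m]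
  have hqmγ2 : (P (KSWaux.nr X 0 m)).toReal - γ < ε / 8 := by linarith
  linarith
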